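/- A hilbertian field k does not admit a proper henselian valuation ring: if 𝔬 ⊊ k is a valuation ring of k that is henselian, then a contradiction follows. Concretely: if 𝔬 is a proper henselian valuation subring of k with maximal ideal m, f(X) ∈ k[X] is a separable polynomial without a zero in k such that f(k) ∩ m = ∅, and π ∈ m \ {0}, then the polynomial g(X,Y) = f(X)·Y² + f(X)·Y + π ∈ k[X,Y] has the property that for every x ∈ k, the polynomial g(x,Y) ∈ k[Y] has a root in k. -/
import Mathlib


/-- A hilbertian field does not admit a proper henselian valuation ring, concrete form:
if `𝔬 ⊊ k` is a henselian valuation subring of `k` with maximal ideal `m`, `f ∈ k[X]`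
is a separable polynomial without a zero in `k` such that `f(k) ∩ m = ∅`, and
`π ∈ m \ {0}`, then for every `x ∈ k` the polynomial
`g(x,Y) = f(x)·Y² + f(x)·Y + π` has a root in `k` (contradicting hilbertianity, since
`g(X,Y)` is absolutely irreducible). -/
theorem proper_henselian_valuation_specialization_has_root
    {k : Type*} [Field k] (𝔬 : ValuationSubring k) (hproper : 𝔬 ≠ ⊤)
    (hhens : HenselianLocalRing 𝔬)
    (f : Polynomial k) (hsep : f.Separable) (hnoroot : ∀ x : k, f.eval x ≠ 0)
    (hfm : ∀ x : k, ∀ hx : f.eval x ∈ 𝔬,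
      (⟨f.eval x, hx⟩ : 𝔬) ∉ IsLocalRing.maximalIdeal 𝔬)
    (π : k) (hπ0 : π ≠ 0) (hπ𝔬 : π ∈ 𝔬)
    (hπm : (⟨π, hπ𝔬⟩ : 𝔬) ∈ IsLocalRing.maximalIdeal 𝔬) :
    ∀ x : k, ∃ y : k, f.eval x * y ^ 2 + f.eval x * y + π = 0 := by
  intro x
  set c := f.eval x with hc
  have hc0 : c ≠ 0 := hnoroot x
  obtain ⟨s, hs, hsm⟩ : ∃ s : 𝔬, (s : k) = π / c ∧ s ∈ IsLocalRing.maximalIdeal 𝔬 := by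
    by_cases hco : c ∈ 𝔬
    · have hu : IsUnit (⟨c, hco⟩ : 𝔬) := by
        by_contra h
        exact hfm x hco ((IsLocalRing.mem_maximalIdeal _).mpr h)
      obtain ⟨u, hu⟩ := hu
      refine ⟨⟨π, hπ𝔬⟩ * ↑u⁻¹, ?_, Ideal.mul_mem_right _ _ hπm⟩
      have h1 : ((u : 𝔬) : k) * ((↑u⁻¹ : 𝔬) : k) = 1 := by
        rw [← Subring.coe_mul]
        norm_cast
        simp
      rw [hu] at h1
      have hinv : ((↑u⁻¹ : 𝔬) : k) = c⁻¹ := by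
        field_simp at h1 ⊢
        push_cast at h1
        linear_combination h1
      push_cast
      rw [hinv, div_eq_mul_inv]
    · have hinv : c⁻¹ ∈ 𝔬 := (𝔬.mem_or_inv_mem c).resolve_left hco
      refine ⟨⟨π, hπ𝔬⟩ * ⟨c⁻¹, hinv⟩, ?_, Ideal.mul_mem_right _ _ hπm⟩
      push_cast
      rw [div_eq_mul_inv]
  have hmonic : (Polynomial.X ^ 2 + Polynomial.X + Polynomial.C s).Monic := by
    monicity!
  obtain ⟨a, ha, -⟩ := hhens.is_henselian (Polynomial.X ^ 2 + Polynomial.X + Polynomial.C s)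
    hmonic 0 (by simpa using hsm) (by simp)
  have ha' : (a : k) ^ 2 + (a : k) + π / c = 0 := by
    have := congrArg (fun z : 𝔬 => (z : k)) ha
    simp [Polynomial.IsRoot] at this ⊢
    push_cast at this
    rw [hs] at this
    exact this
  refine ⟨a, ?_⟩
  have : c * ((a : k) ^ 2 + (a : k) + π / c) = 0 := by rw [ha', mul_zero]
  field_simp at this
  linear_combination this
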